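/- Let A, B ⊆ R^d be closed convex cones with A ∩ B ≠ ∅. Then Fix T_DR = {0} if and only if A ∩ B = {0} and A − B = R^d. -/

import Mathlib

open scoped Pointwise
local notation "⟪" x ", " y "⟫_ℝ" => @inner ℝ _ _ x y

section Helpers

variable {H : Type*} [NormedAddCommGroup H] [InnerProductSpace ℝ H]

/-- Variational characterization of metric projections onto convex sets. -/
lemma dr_proj_char {S : Set H} (hconv : Convex ℝ S) {x p : H} (hp : p ∈ S)
    (hmin : ∀ w ∈ S, ‖x - p‖ ≤ ‖x - w‖) : ∀ w ∈ S, ⟪x - p, w - p⟫_ℝ ≤ 0 := by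
  haveI : Nonempty S := ⟨⟨p, hp⟩⟩
  have h1 : ‖x - p‖ = ⨅ w : S, ‖x - w‖ := by
    refine le_antisymm (le_ciInf fun w => hmin w w.2) ?_
    have hbdd : BddBelow (Set.range fun w : S => ‖x - w‖) := by
      refine ⟨0, ?_⟩
      rintro y ⟨w, rfl⟩
      exact norm_nonneg _
    exact ciInf_le hbdd ⟨p, hp⟩
  exact (norm_eq_iInf_iff_real_inner_le_zero hconv hp).mp h1

lemma dr_proj_zero {S : Set H} (hconv : Convex ℝ S) {x p : H} (hp : p ∈ S)
    (hmin : ∀ w ∈ S, ‖x - p‖ ≤ ‖x - w‖) (h0 : (0 : H) ∈ S)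
    (hx : ∀ w ∈ S, ⟪x, w⟫_ℝ ≤ 0) : p = 0 := by
  have h1 := dr_proj_char hconv hp hmin 0 h0
  have h2 : ⟪x, p⟫_ℝ ≤ 0 := hx p hp
  rw [zero_sub, inner_sub_left, inner_neg_right, inner_neg_right] at h1
  have h3 : ⟪p, p⟫_ℝ ≤ 0 := by linarith
  exact real_inner_self_nonpos.mp h3

lemma dr_proj_self {S : Set H} {x p : H} (hx : x ∈ S)
    (hmin : ∀ w ∈ S, ‖x - p‖ ≤ ‖x - w‖) : p = x := by
  have h := hmin x hx
  rw [sub_self, norm_zero] at h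
  have h2 := norm_le_zero_iff.mp h
  rw [sub_eq_zero] at h2
  exact h2.symm

end Helpers

/-- For closed convex cones `A, B ⊆ ℝ^d` with `A ∩ B ≠ ∅` and the Douglas–Rachford
operator `T_DR`, one has `Fix T_DR = {0}` iff `A ∩ B = {0}` and `A - B = ℝ^d`. -/
theorem stmt9 {d : ℕ} (A B : Set (EuclideanSpace ℝ (Fin d)))
    (hAclosed : IsClosed A) (hAconv : Convex ℝ A)
    (hBclosed : IsClosed B) (hBconv : Convex ℝ B)
    (hAcone : ∀ x ∈ A, ∀ t : ℝ, 0 < t → t • x ∈ A)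
    (hBcone : ∀ x ∈ B, ∀ t : ℝ, 0 < t → t • x ∈ B)
    (hAB : (A ∩ B).Nonempty)
    (PA PB T : EuclideanSpace ℝ (Fin d) → EuclideanSpace ℝ (Fin d))
    (hPA : ∀ x, PA x ∈ A ∧ ∀ w ∈ A, ‖x - PA x‖ ≤ ‖x - w‖)
    (hPB : ∀ x, PB x ∈ B ∧ ∀ w ∈ B, ‖x - PB x‖ ≤ ‖x - w‖)
    (hT : ∀ x, T x = (1 / 2 : ℝ) •
      (x + ((2 : ℝ) • PB ((2 : ℝ) • PA x - x) - ((2 : ℝ) • PA x - x)))) :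
    {x | T x = x} = {0} ↔ A ∩ B = {0} ∧ A - B = Set.univ := by
  obtain ⟨e, heA, heB⟩ := hAB
  -- 0 belongs to any nonempty closed cone
  have hmemzero : ∀ (S : Set (EuclideanSpace ℝ (Fin d))), IsClosed S →
      (∀ x ∈ S, ∀ t : ℝ, 0 < t → t • x ∈ S) → ∀ y ∈ S, (0 : EuclideanSpace ℝ (Fin d)) ∈ S := by
    intro S hS hScone y hy
    have htend : Filter.Tendsto (fun n : ℕ => (1 / ((n : ℝ) + 1)) • y)
        Filter.atTop (nhds 0) := by
      have h := tendsto_one_div_add_atTop_nhds_zero_nat (𝕜 := ℝ)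
      simpa using h.smul_const y
    exact hS.mem_of_tendsto htend
      (Filter.Eventually.of_forall fun n => hScone y hy _ (by positivity))
  have h0A : (0 : EuclideanSpace ℝ (Fin d)) ∈ A := hmemzero A hAclosed hAcone e heA
  have h0B : (0 : EuclideanSpace ℝ (Fin d)) ∈ B := hmemzero B hBclosed hBcone e heB
  -- fixed point characterization
  have hfix : ∀ x, T x = x ↔ PB ((2 : ℝ) • PA x - x) = PA x := by
    intro x
    rw [hT x]
    constructor
    · intro h
      have h3 : (2 : ℝ) • PB ((2 : ℝ) • PA x - x) = (2 : ℝ) • PA x := by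
        linear_combination (norm := module) (2 : ℝ) • h
      exact smul_right_injective _ (two_ne_zero) h3
    · intro h
      rw [h]
      module
  constructor
  · -- Fix = {0} → ...
    intro hFix
    have hABz : A ∩ B = {0} := by
      apply Set.eq_singleton_iff_unique_mem.mpr
      refine ⟨⟨h0A, h0B⟩, ?_⟩
      intro z hz
      have hPAz : PA z = z := dr_proj_self hz.1 (hPA z).2
      have harg : (2 : ℝ) • PA z - z = z := by rw [hPAz]; module
      have hPBz : PB ((2 : ℝ) • PA z - z) = z := by
        rw [harg]; exact dr_proj_self hz.2 (hPB z).2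
      have hTz : T z = z := (hfix z).mpr (by rw [hPBz, hPAz])
      have : z ∈ ({0} : Set (EuclideanSpace ℝ (Fin d))) := by rw [← hFix]; exact hTz
      simpa using this
    refine ⟨hABz, ?_⟩
    -- the polar of A - B is trivial
    have hpolar : ∀ u : EuclideanSpace ℝ (Fin d),
        (∀ a ∈ A, ⟪u, a⟫_ℝ ≤ 0) → (∀ b ∈ B, 0 ≤ ⟪u, b⟫_ℝ) → u = 0 := by
      intro u hA hB
      have hPAu : PA u = 0 := dr_proj_zero hAconv (hPA u).1 (hPA u).2 h0A hA
      have harg : (2 : ℝ) • PA u - u = -u := by rw [hPAu]; module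
      have hPBu : PB ((2 : ℝ) • PA u - u) = 0 := by
        rw [harg]
        exact dr_proj_zero hBconv (hPB (-u)).1 (hPB (-u)).2 h0B
          (fun w hw => by rw [inner_neg_left]; linarith [hB w hw])
      have hTu : T u = u := (hfix u).mpr (by rw [hPBu, hPAu])
      have : u ∈ ({0} : Set (EuclideanSpace ℝ (Fin d))) := by rw [← hFix]; exact hTu
      simpa using this
    -- C = A - B
    have hCconv : Convex ℝ (A - B) := hAconv.sub hBconv
    have h0C : (0 : EuclideanSpace ℝ (Fin d)) ∈ A - B := by
      simpa using Set.sub_mem_sub h0A h0B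
    have hCcone : ∀ c ∈ A - B, ∀ t : ℝ, 0 < t → t • c ∈ A - B := by
      rintro c ⟨a, ha, b, hb, rfl⟩ t ht
      have : t • (a - b) = t • a - t • b := by module
      rw [this]
      exact Set.sub_mem_sub (hAcone a ha t ht) (hBcone b hb t ht)
    have hdense : closure (A - B) = Set.univ := by
      by_contra hne
      obtain ⟨v, hv⟩ := Set.ne_univ_iff_exists_notMem _ |>.mp hne
      obtain ⟨f, u, hfu, huv⟩ :=
        geometric_hahn_banach_closed_point hCconv.closure isClosed_closure hv
      have hu0 : (0 : ℝ) < u := by simpa using hfu 0 (subset_closure h0C)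
      have hfle : ∀ c ∈ A - B, f c ≤ 0 := by
        intro c hc
        by_contra hpos
        push_neg at hpos
        have h2 := hfu (((u + 1) / f c) • c)
          (subset_closure (hCcone c hc ((u + 1) / f c) (div_pos (by linarith) hpos)))
        rw [map_smul] at h2
        have : ((u + 1) / f c) • f c = u + 1 := by
          rw [smul_eq_mul]; field_simp
        rw [this] at h2
        linarith
      set w := (InnerProductSpace.toDual ℝ (EuclideanSpace ℝ (Fin d))).symm f with hw
      have hwinner : ∀ x, ⟪w, x⟫_ℝ = f x := fun x => InnerProductSpace.toDual_symm_apply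
      have hwA : ∀ a ∈ A, ⟪w, a⟫_ℝ ≤ 0 := fun a ha => by
        have h3 := hfle (a - 0) (Set.sub_mem_sub ha h0B)
        rw [sub_zero] at h3
        rw [hwinner]
        exact h3
      have hwB : ∀ b ∈ B, 0 ≤ ⟪w, b⟫_ℝ := fun b hb => by
        have h3 := hfle (0 - b) (Set.sub_mem_sub h0A hb)
        rw [← hwinner, zero_sub, inner_neg_right] at h3
        linarith
      have hw0 : w = 0 := hpolar w hwA hwB
      have hfv : f v = 0 := by rw [← hwinner v, hw0, inner_zero_left]
      linarith
    have hspan : affineSpan ℝ (A - B) = ⊤ := by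
      have hclosed : IsClosed (affineSpan ℝ (A - B) : Set (EuclideanSpace ℝ (Fin d))) :=
        (affineSpan ℝ (A - B)).closed_of_finiteDimensional
      have hsub : closure (A - B) ⊆ (affineSpan ℝ (A - B) : Set (EuclideanSpace ℝ (Fin d))) :=
        closure_minimal (subset_affineSpan ℝ _) hclosed
      rw [hdense] at hsub
      exact eq_top_iff.mpr fun x _ => hsub (Set.mem_univ x)
    obtain ⟨x₀, hx₀⟩ := hCconv.interior_nonempty_iff_affineSpan_eq_top.mpr hspan
    apply Set.eq_univ_iff_forall.mpr
    intro v
    have hy : ((2 : ℝ) • v - x₀) ∈ closure (A - B) := by rw [hdense]; trivial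
    have hmem := hCconv.combo_interior_closure_mem_interior hx₀ hy
      (by norm_num : (0 : ℝ) < 1 / 2) (by norm_num : (0 : ℝ) ≤ 1 / 2) (by norm_num)
    have heq : (1 / 2 : ℝ) • x₀ + (1 / 2 : ℝ) • ((2 : ℝ) • v - x₀) = v := by module
    rw [heq] at hmem
    exact interior_subset hmem
  · -- ← direction
    rintro ⟨hABz, hABuniv⟩
    ext x
    simp only [Set.mem_setOf_eq, Set.mem_singleton_iff]
    constructor
    · intro hx
      rw [hfix x] at hx
      have hpA : PA x ∈ A := (hPA x).1
      have hpB : PA x ∈ B := hx ▸ (hPB ((2 : ℝ) • PA x - x)).1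
      have hp0 : PA x = 0 := by
        have h2 : PA x ∈ A ∩ B := ⟨hpA, hpB⟩
        rw [hABz] at h2
        simpa using h2
      have hvarA := dr_proj_char hAconv (hPA x).1 (hPA x).2
      have hvarB := dr_proj_char hBconv (hPB ((2 : ℝ) • PA x - x)).1
        (hPB ((2 : ℝ) • PA x - x)).2
      have hxmem : x ∈ A - B := by rw [hABuniv]; trivial
      obtain ⟨a, ha, b, hb, hab⟩ := hxmem
      have hab' : a - b = x := hab
      have h1 : ⟪x, a⟫_ℝ ≤ 0 := by
        have h := hvarA a ha
        rwa [hp0, sub_zero, sub_zero] at h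
      have h2 : 0 ≤ ⟪x, b⟫_ℝ := by
        have h := hvarB b hb
        rw [hx, hp0] at h
        simp only [smul_zero, zero_sub, sub_zero] at h
        rw [inner_neg_left] at h
        linarith
      have h3 : ⟪x, x⟫_ℝ ≤ 0 := by
        have h4 : ⟪x, a⟫_ℝ - ⟪x, b⟫_ℝ = ⟪x, x⟫_ℝ := by rw [← inner_sub_right, hab']
        linarith
      exact real_inner_self_nonpos.mp h3
    · rintro rfl
      rw [hfix 0]
      have hPA0 : PA 0 = 0 := dr_proj_self h0A (hPA 0).2
      have harg : (2 : ℝ) • PA 0 - 0 = 0 := by rw [hPA0]; module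
      rw [harg, hPA0]
      exact dr_proj_self h0B (hPB 0).2
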